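/- Let O ⊂ (0,1] be open with connected components (intervals) having centers x_k and radii c_k (with the component containing 1, if any, treated as an interval (x₀−c₀, x₀+c₀) ∩ (0,1]). Then the measure μ(dt) = (1/2)·1_{[0,1]∖O}(t) dt + Σ_k c_k δ_{x_k}(dt), extended to a probability measure on [0,1] ∪ {∞} by placing remaining mass at ∞, satisfies ∫_{[0,t]} s dμ(s) = μ([0,t])² for all t ∈ [0,1]. -/

import Mathlib

open MeasureTheory Set
open scoped ENNReal

lemma ioc_lint (a u : ℝ) (h : 0 ≤ a) (hu0 : 0 ≤ u) :
    ∫⁻ s in Ioc a u, ENNReal.ofReal s = ENNReal.ofReal ((u^2 - a^2)/2) := by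
  rcases le_or_gt u a with hu | hu
  · rw [Ioc_eq_empty (by exact not_lt.2 hu)]
    simp only [Measure.restrict_empty, lintegral_zero_measure]
    rw [eq_comm, ENNReal.ofReal_eq_zero]
    nlinarith
  · rw [← ofReal_integral_eq_lintegral_ofReal]
    · rw [← intervalIntegral.integral_of_le hu.le, integral_id]
    · exact (continuous_id.integrableOn_Ioc)
    · filter_upwards [ae_restrict_mem measurableSet_Ioc] with s hs
      exact le_of_lt (lt_of_le_of_lt h hs.1)

lemma set_eq (a b t : ℝ) (ha : 0 ≤ a) (ht : t ≤ 1) :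
    Icc 0 t ∩ (Ioo a b ∩ Ioc (0:ℝ) 1) = Ioc a t ∩ Iio b := by
  ext y
  simp only [mem_inter_iff, mem_Icc, mem_Ioo, mem_Ioc, mem_Iio]
  constructor
  · rintro ⟨⟨_, h2⟩, ⟨h3, h4⟩, _⟩; exact ⟨⟨h3, h2⟩, h4⟩
  · rintro ⟨⟨h1, h2⟩, h3⟩
    exact ⟨⟨(lt_of_le_of_lt ha h1).le, h2⟩, ⟨h1, h3⟩, lt_of_le_of_lt ha h1, h2.trans ht⟩

lemma set_eq2 (a b t : ℝ) (h : t < b) : Ioc a t ∩ Iio b = Ioc a t := by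
  ext y
  simp only [mem_inter_iff, mem_Ioc, mem_Iio]
  exact ⟨fun h => h.1, fun hy => ⟨hy, lt_of_le_of_lt hy.2 h⟩⟩

lemma set_eq3 (a b t : ℝ) (h : b ≤ t) : Ioc a t ∩ Iio b = Ioo a b := by
  ext y
  simp only [mem_inter_iff, mem_Ioc, mem_Iio, mem_Ioo]
  exact ⟨fun ⟨⟨h1, _⟩, h3⟩ => ⟨h1, h3⟩, fun ⟨h1, h2⟩ => ⟨⟨h1, (h2.le.trans h)⟩, h2⟩⟩

lemma piece_meas (a b t : ℝ) (ha : 0 ≤ a) (ht : t ≤ 1) :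
    volume (Icc 0 t ∩ (Ioo a b ∩ Ioc (0:ℝ) 1)) = ENNReal.ofReal (min t b - a) := by
  rw [set_eq a b t ha ht]
  rcases lt_or_ge t b with h | h
  · rw [min_eq_left h.le, set_eq2 a b t h, Real.volume_Ioc]
  · rw [min_eq_right h, set_eq3 a b t h, Real.volume_Ioo]

lemma piece_lint (a b t : ℝ) (ha : 0 ≤ a) (ht0 : 0 ≤ t) (ht : t ≤ 1) (hab : a ≤ b) :
    ∫⁻ s in Icc 0 t ∩ (Ioo a b ∩ Ioc (0:ℝ) 1), ENNReal.ofReal s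
      = ENNReal.ofReal (((min t b)^2 - a^2)/2) := by
  rw [set_eq a b t ha ht]
  rcases lt_or_ge t b with h | h
  · rw [min_eq_left h.le, set_eq2 a b t h]
    exact ioc_lint a t ha ht0
  · rw [min_eq_right h, set_eq3 a b t h]
    exact (setLIntegral_congr Ioo_ae_eq_Ioc).trans (ioc_lint a b ha (ha.trans hab))

lemma icc_lint (t : ℝ) (ht0 : 0 ≤ t) :
    ∫⁻ s in Icc (0:ℝ) t, ENNReal.ofReal s = ENNReal.ofReal (t^2/2) := by
  rw [← setLIntegral_congr (Ioc_ae_eq_Icc (a := (0:ℝ)) (b := t))]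
  simpa using ioc_lint 0 t le_rfl ht0

lemma two_ofReal (r : ℝ) : (2:ℝ≥0∞) * ENNReal.ofReal r = ENNReal.ofReal (2*r) := by
  rw [ENNReal.ofReal_mul (by norm_num)]
  norm_num

lemma half_two (z : ℝ≥0∞) : (2:ℝ≥0∞)⁻¹ * (2 * z) = z := by
  rw [← mul_assoc, ENNReal.inv_mul_cancel (by norm_num) (by norm_num), one_mul]

lemma inact (x c t : ℝ) (hc : 0 ≤ c) (hxc : 0 ≤ x - c) (ht0 : 0 ≤ t)
    (h : ¬(x - c < t ∧ t < x + c)) :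
    ENNReal.ofReal (min t (x + c) - (x - c)) = 2 * (if x ≤ t then ENNReal.ofReal c else 0)
    ∧ ENNReal.ofReal (((min t (x + c))^2 - (x - c)^2)/2)
      = 2 * (if x ≤ t then ENNReal.ofReal (x * c) else 0) := by
  rw [not_and_or, not_lt, not_lt] at h
  rcases h with h | h
  · have hm : min t (x + c) ≤ x - c := le_trans (min_le_left _ _) h
    have hm0 : 0 ≤ min t (x + c) := le_min ht0 (by linarith)
    constructor
    · rw [ENNReal.ofReal_eq_zero.2 (by linarith)]
      split_ifs with hx
      · have : c = 0 := le_antisymm (by linarith) hc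
        simp [this]
      · simp
    · rw [ENNReal.ofReal_eq_zero.2 (by nlinarith)]
      split_ifs with hx
      · have : c = 0 := le_antisymm (by linarith) hc
        simp [this]
      · simp
  · have hmin : min t (x + c) = x + c := min_eq_right h
    have hx : x ≤ t := by linarith
    rw [hmin, if_pos hx, if_pos hx, two_ofReal, two_ofReal]
    constructor
    · congr 1; ring
    · congr 1; ring

lemma half_ofReal (r : ℝ) : (2:ℝ≥0∞)⁻¹ * ENNReal.ofReal (2*r) = ENNReal.ofReal r := by
  rw [← two_ofReal, half_two]

lemma combine (D S A : ℝ≥0∞) (r : ℝ) (hS : S = 2 * A) (hD : D + S = ENNReal.ofReal (2*r)) :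
    2⁻¹ * D + A = ENNReal.ofReal r := by
  have hA : A ≠ ⊤ := by
    intro hA
    rw [hS, hA] at hD
    simp [ENNReal.mul_top] at hD
    exact absurd hD.symm (ENNReal.mul_ne_top (by norm_num) ENNReal.ofReal_ne_top)
  calc 2⁻¹ * D + A = 2⁻¹ * D + 2⁻¹ * (2 * A) := by rw [half_two]
    _ = 2⁻¹ * (D + S) := by rw [← mul_add, hS]
    _ = ENNReal.ofReal r := by rw [hD, half_ofReal]

lemma cancel (D S : ℝ≥0∞) (u v : ℝ) (hu : 0 ≤ u) (huv : u ≤ v)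
    (h : D + (ENNReal.ofReal (v - u) + S) = ENNReal.ofReal v) : D + S = ENNReal.ofReal u := by
  have hv : ENNReal.ofReal v = ENNReal.ofReal u + ENNReal.ofReal (v - u) := by
    rw [← ENNReal.ofReal_add hu (by linarith)]
    congr 1; ring
  rw [hv] at h
  have h2 : D + S + ENNReal.ofReal (v - u) = ENNReal.ofReal u + ENNReal.ofReal (v - u) := by
    rw [← h]; ring
  exact (ENNReal.add_left_inj ENNReal.ofReal_ne_top).1 h2

lemma peel (f : ℕ → ℝ≥0∞) (K : ℕ) : ∑' k, f k = f K + ∑' k, if k = K then 0 else f k := by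
  rw [ENNReal.tsum_eq_add_tsum_ite K]
  congr 1
  exact tsum_congr fun k => by by_cases hk : k = K <;> simp [hk]

lemma work (x c : ℕ → ℝ) (hc : ∀ k, 0 ≤ c k) (hxc : ∀ k, 0 ≤ x k - c k)
    (hdisj : Pairwise (Function.onFun Disjoint
      (fun k => Ioo (x k - c k) (x k + c k) ∩ Ioc (0:ℝ) 1)))
    (t : ℝ) (ht0 : 0 ≤ t) (ht1 : t ≤ 1) :
    2⁻¹ * volume (Icc 0 t \ ⋃ k, Ioo (x k - c k) (x k + c k) ∩ Ioc (0:ℝ) 1)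
        + ∑' k, (if x k ≤ t then ENNReal.ofReal (c k) else 0) ≤ 1
    ∧ 2⁻¹ * (∫⁻ s in Icc 0 t \ ⋃ k, Ioo (x k - c k) (x k + c k) ∩ Ioc (0:ℝ) 1, ENNReal.ofReal s)
        + ∑' k, (if x k ≤ t then ENNReal.ofReal (x k * c k) else 0)
      = (2⁻¹ * volume (Icc 0 t \ ⋃ k, Ioo (x k - c k) (x k + c k) ∩ Ioc (0:ℝ) 1)
        + ∑' k, (if x k ≤ t then ENNReal.ofReal (c k) else 0))^2 := by
  set O : Set ℝ := ⋃ k, Ioo (x k - c k) (x k + c k) ∩ Ioc (0:ℝ) 1 with hO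
  have hIm : ∀ k, MeasurableSet (Ioo (x k - c k) (x k + c k) ∩ Ioc (0:ℝ) 1) :=
    fun k => measurableSet_Ioo.inter measurableSet_Ioc
  have hOm : MeasurableSet O := MeasurableSet.iUnion hIm
  have hdisj' : Pairwise (Function.onFun Disjoint
      (fun k => Icc 0 t ∩ (Ioo (x k - c k) (x k + c k) ∩ Ioc (0:ℝ) 1))) :=
    fun i j hij => ((hdisj hij).mono inter_subset_right inter_subset_right)
  have hMsum : volume (Icc 0 t ∩ O) = ∑' k, ENNReal.ofReal (min t (x k + c k) - (x k - c k)) := by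
    rw [hO, inter_iUnion, measure_iUnion hdisj' (fun k => measurableSet_Icc.inter (hIm k))]
    exact tsum_congr fun k => piece_meas _ _ _ (hxc k) ht1
  have hVsum : ∫⁻ s in Icc 0 t ∩ O, ENNReal.ofReal s
      = ∑' k, ENNReal.ofReal (((min t (x k + c k))^2 - (x k - c k)^2)/2) := by
    rw [hO, inter_iUnion, lintegral_iUnion (fun k => measurableSet_Icc.inter (hIm k)) hdisj']
    exact tsum_congr fun k => piece_lint _ _ _ (hxc k) ht0 ht1 (by have := hc k; linarith)
  have hMD : volume (Icc 0 t \ O)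
      + ∑' k, ENNReal.ofReal (min t (x k + c k) - (x k - c k)) = ENNReal.ofReal t := by
    rw [← hMsum, add_comm, measure_inter_add_diff _ hOm, Real.volume_Icc, sub_zero]
  have hVD : (∫⁻ s in Icc 0 t \ O, ENNReal.ofReal s)
      + ∑' k, ENNReal.ofReal (((min t (x k + c k))^2 - (x k - c k)^2)/2)
      = ENNReal.ofReal (t^2/2) := by
    rw [← hVsum, add_comm, ← lintegral_union (measurableSet_Icc.diff hOm)
        (disjoint_sdiff_self_right.mono_left inter_subset_right),
      inter_union_diff, icc_lint t ht0]
  by_cases hact : ∃ K, x K - c K < t ∧ t < x K + c K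
  · obtain ⟨K, hK1, hK2⟩ := hact
    have haK : 0 ≤ x K - c K := hxc K
    have hKinact : ∀ k, k ≠ K → ¬(x k - c k < t ∧ t < x k + c k) := by
      rintro k hk ⟨h1, h2⟩
      exact Set.disjoint_left.1 (hdisj hk)
        ⟨⟨h1, h2⟩, lt_of_le_of_lt (hxc k) h1, ht1⟩
        ⟨⟨hK1, hK2⟩, lt_of_le_of_lt (hxc K) hK1, ht1⟩
    -- peel index K from all four sums
    have pm := peel (fun k => ENNReal.ofReal (min t (x k + c k) - (x k - c k))) K
    have pv := peel (fun k => ENNReal.ofReal (((min t (x k + c k))^2 - (x k - c k)^2)/2)) K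
    have pa := peel (fun k => if x k ≤ t then ENNReal.ofReal (c k) else 0) K
    have pi := peel (fun k => if x k ≤ t then ENNReal.ofReal (x k * c k) else 0) K
    have tca : (∑' k, if k = K then 0 else ENNReal.ofReal (min t (x k + c k) - (x k - c k)))
        = 2 * ∑' k, if k = K then 0 else (if x k ≤ t then ENNReal.ofReal (c k) else 0) := by
      rw [← ENNReal.tsum_mul_left]
      refine tsum_congr fun k => ?_
      by_cases hk : k = K
      · simp [hk]
      · rw [if_neg hk, if_neg hk]
        exact (inact (x k) (c k) t (hc k) (hxc k) ht0 (hKinact k hk)).1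
    have tcv : (∑' k, if k = K then 0
          else ENNReal.ofReal (((min t (x k + c k))^2 - (x k - c k)^2)/2))
        = 2 * ∑' k, if k = K then 0 else (if x k ≤ t then ENNReal.ofReal (x k * c k) else 0) := by
      rw [← ENNReal.tsum_mul_left]
      refine tsum_congr fun k => ?_
      by_cases hk : k = K
      · simp [hk]
      · rw [if_neg hk, if_neg hk]
        exact (inact (x k) (c k) t (hc k) (hxc k) ht0 (hKinact k hk)).2
    rw [pm] at hMD
    rw [pv] at hVD
    simp only [min_eq_left hK2.le] at hMD hVD
    have hDm : volume (Icc 0 t \ O)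
        + (∑' k, if k = K then 0 else ENNReal.ofReal (min t (x k + c k) - (x k - c k)))
        = ENNReal.ofReal (x K - c K) :=
      cancel _ _ (x K - c K) t haK hK1.le hMD
    have hDv : (∫⁻ s in Icc 0 t \ O, ENNReal.ofReal s)
        + (∑' k, if k = K then 0
            else ENNReal.ofReal (((min t (x k + c k))^2 - (x k - c k)^2)/2))
        = ENNReal.ofReal ((x K - c K)^2/2) := by
      refine cancel _ _ ((x K - c K)^2/2) (t^2/2) (by positivity) (by nlinarith) ?_
      rw [show t^2/2 - (x K - c K)^2/2 = (t^2 - (x K - c K)^2)/2 by ring]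
      exact hVD
    have hF : 2⁻¹ * volume (Icc 0 t \ O)
        + ∑' k, (if x k ≤ t then ENNReal.ofReal (c k) else 0)
        = ENNReal.ofReal ((x K - c K)/2) + (if x K ≤ t then ENNReal.ofReal (c K) else 0) := by
      rw [pa, ← add_assoc, add_comm (2⁻¹ * _) _, add_assoc, add_comm]
      congr 1
      exact combine _ _ _ _ tca (by rw [hDm]; congr 1; ring)
    have hG : 2⁻¹ * (∫⁻ s in Icc 0 t \ O, ENNReal.ofReal s)
        + ∑' k, (if x k ≤ t then ENNReal.ofReal (x k * c k) else 0)
        = ENNReal.ofReal ((x K - c K)^2/4) + (if x K ≤ t then ENNReal.ofReal (x K * c K) else 0) := by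
      rw [pi, ← add_assoc, add_comm (2⁻¹ * _) _, add_assoc, add_comm]
      congr 1
      exact combine _ _ _ _ tcv (by rw [hDv]; congr 1; ring)
    rw [hF, hG]
    have hx0 : 0 ≤ x K := le_trans (hc K) (by linarith [hxc K])
    have hhalf : (0:ℝ) ≤ (x K - c K)/2 := by linarith
    constructor
    · split_ifs with hx
      · rw [← ENNReal.ofReal_add hhalf (hc K)]
        refine ENNReal.ofReal_le_one.2 ?_
        have hc1 : c K ≤ 1 := by linarith [hxc K]
        linarith
      · rw [add_zero]
        exact ENNReal.ofReal_le_one.2 (by linarith)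
    · split_ifs with hx
      · rw [← ENNReal.ofReal_add hhalf (hc K), ← ENNReal.ofReal_pow (add_nonneg hhalf (hc K)),
          ← ENNReal.ofReal_add (by positivity) (mul_nonneg hx0 (hc K))]
        congr 1
        ring
      · rw [add_zero, add_zero, ← ENNReal.ofReal_pow hhalf]
        congr 1
        ring
  · push_neg at hact
    have hA : ∀ k, ¬(x k - c k < t ∧ t < x k + c k) := by
      intro k ⟨h1, h2⟩; exact absurd h2 (not_lt.2 (hact k h1))
    have tca : (∑' k, ENNReal.ofReal (min t (x k + c k) - (x k - c k)))
        = 2 * ∑' k, (if x k ≤ t then ENNReal.ofReal (c k) else 0) := by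
      rw [← ENNReal.tsum_mul_left]
      exact tsum_congr fun k => (inact (x k) (c k) t (hc k) (hxc k) ht0 (hA k)).1
    have tcv : (∑' k, ENNReal.ofReal (((min t (x k + c k))^2 - (x k - c k)^2)/2))
        = 2 * ∑' k, (if x k ≤ t then ENNReal.ofReal (x k * c k) else 0) := by
      rw [← ENNReal.tsum_mul_left]
      exact tsum_congr fun k => (inact (x k) (c k) t (hc k) (hxc k) ht0 (hA k)).2
    have hF : 2⁻¹ * volume (Icc 0 t \ O)
        + ∑' k, (if x k ≤ t then ENNReal.ofReal (c k) else 0) = ENNReal.ofReal (t/2) :=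
      combine _ _ _ _ tca (by rw [hMD]; congr 1; ring)
    have hG : 2⁻¹ * (∫⁻ s in Icc 0 t \ O, ENNReal.ofReal s)
        + ∑' k, (if x k ≤ t then ENNReal.ofReal (x k * c k) else 0)
        = ENNReal.ofReal (t^2/4) :=
      combine _ _ _ _ tcv (by rw [hVD]; congr 1; ring)
    rw [hF, hG]
    refine ⟨ENNReal.ofReal_le_one.2 (by linarith), ?_⟩
    rw [← ENNReal.ofReal_pow (by positivity)]
    congr 1
    ring


section
variable (x c : ℕ → ℝ)

noncomputable def mu0 : Measure ℝ≥0∞ :=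
  (2:ℝ≥0∞)⁻¹ • Measure.map ENNReal.ofReal
      (volume.restrict (Icc (0:ℝ) 1 \ ⋃ k, Ioo (x k - c k) (x k + c k) ∩ Ioc (0:ℝ) 1))
    + Measure.sum (fun k =>
        (if x k ≤ 1 then ENNReal.ofReal (c k) else 0) • Measure.dirac (ENNReal.ofReal (x k)))

lemma hpre (t : ℝ) (ht0 : 0 ≤ t) :
    ENNReal.ofReal ⁻¹' (Icc 0 (ENNReal.ofReal t)) = Iic t := by
  ext s
  simp [ENNReal.ofReal_le_ofReal_iff ht0]

lemma hset (O : Set ℝ) (t : ℝ) (ht1 : t ≤ 1) :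
    Iic t ∩ (Icc 0 1 \ O) = Icc 0 t \ O := by
  ext y
  simp only [mem_inter_iff, mem_Iic, mem_diff, mem_Icc]
  constructor
  · rintro ⟨h1, ⟨h2, _⟩, h4⟩; exact ⟨⟨h2, h1⟩, h4⟩
  · rintro ⟨⟨h1, h2⟩, h3⟩; exact ⟨h2, ⟨h1, h2.trans ht1⟩, h3⟩

lemma mu0_apply (hc : ∀ k, 0 ≤ c k) (hxc : ∀ k, 0 ≤ x k - c k)
    (t : ℝ) (ht0 : 0 ≤ t) (ht1 : t ≤ 1) :
    mu0 x c (Icc 0 (ENNReal.ofReal t))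
      = 2⁻¹ * volume (Icc 0 t \ ⋃ k, Ioo (x k - c k) (x k + c k) ∩ Ioc (0:ℝ) 1)
        + ∑' k, (if x k ≤ t then ENNReal.ofReal (c k) else 0) := by
  have hS : MeasurableSet (Icc (0:ℝ≥0∞) (ENNReal.ofReal t)) := measurableSet_Icc
  rw [mu0, Measure.add_apply, Measure.smul_apply,
    Measure.map_apply ENNReal.measurable_ofReal hS, hpre t ht0,
    Measure.restrict_apply measurableSet_Iic, hset _ t ht1, Measure.sum_apply _ hS,
    smul_eq_mul]
  congr 1
  refine tsum_congr fun k => ?_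
  rw [Measure.smul_apply, Measure.dirac_apply' _ hS, smul_eq_mul]
  have hxk : (ENNReal.ofReal (x k) ∈ Icc 0 (ENNReal.ofReal t)) ↔ x k ≤ t := by
    simp [ENNReal.ofReal_le_ofReal_iff ht0]
  by_cases hx : x k ≤ t
  · rw [indicator_of_mem (hxk.2 hx), if_pos hx, if_pos (hx.trans ht1), Pi.one_apply, mul_one]
  · rw [indicator_of_notMem (fun h => hx (hxk.1 h)), if_neg hx, mul_zero]

lemma mu0_univ : mu0 x c univ
    = 2⁻¹ * volume (Icc 0 1 \ ⋃ k, Ioo (x k - c k) (x k + c k) ∩ Ioc (0:ℝ) 1)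
        + ∑' k, (if x k ≤ (1:ℝ) then ENNReal.ofReal (c k) else 0) := by
  rw [mu0, Measure.add_apply, Measure.smul_apply, Measure.map_apply ENNReal.measurable_ofReal
    MeasurableSet.univ, preimage_univ, Measure.restrict_apply_univ, Measure.sum_apply _
    MeasurableSet.univ, smul_eq_mul]
  congr 1
  refine tsum_congr fun k => ?_
  rw [Measure.smul_apply, Measure.dirac_apply' _ MeasurableSet.univ, smul_eq_mul]
  simp

lemma mu0_lint (hc : ∀ k, 0 ≤ c k) (hxc : ∀ k, 0 ≤ x k - c k)
    (t : ℝ) (ht0 : 0 ≤ t) (ht1 : t ≤ 1) :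
    ∫⁻ s in Icc 0 (ENNReal.ofReal t), s ∂(mu0 x c)
      = 2⁻¹ * (∫⁻ s in Icc 0 t \ ⋃ k, Ioo (x k - c k) (x k + c k) ∩ Ioc (0:ℝ) 1,
          ENNReal.ofReal s)
        + ∑' k, (if x k ≤ t then ENNReal.ofReal (x k * c k) else 0) := by
  have hS : MeasurableSet (Icc (0:ℝ≥0∞) (ENNReal.ofReal t)) := measurableSet_Icc
  have hind : Measurable (fun s : ℝ≥0∞ => (Icc (0:ℝ≥0∞) (ENNReal.ofReal t)).indicator (fun u => u) s) :=
    measurable_id.indicator hS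
  rw [mu0, ← lintegral_indicator hS, lintegral_add_measure, lintegral_smul_measure,
    lintegral_sum_measure]
  congr 1
  · rw [lintegral_map hind ENNReal.measurable_ofReal]
    have : ∀ s : ℝ, (Icc (0:ℝ≥0∞) (ENNReal.ofReal t)).indicator (fun u => u) (ENNReal.ofReal s)
        = (Iic t).indicator (fun u => ENNReal.ofReal u) s := by
      intro s
      by_cases hs : s ≤ t
      · simp only [indicator_of_mem (show ENNReal.ofReal s ∈ Icc (0:ℝ≥0∞) (ENNReal.ofReal t) by
          simp [ENNReal.ofReal_le_ofReal_iff ht0, hs]), indicator_of_mem (mem_Iic.2 hs)]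
      · simp only [indicator_of_notMem (show ENNReal.ofReal s ∉ Icc (0:ℝ≥0∞) (ENNReal.ofReal t) by
          simp [ENNReal.ofReal_le_ofReal_iff ht0, hs]), indicator_of_notMem (fun h => hs (mem_Iic.1 h))]
    rw [lintegral_congr this, lintegral_indicator measurableSet_Iic,
      Measure.restrict_restrict measurableSet_Iic, hset _ t ht1, smul_eq_mul]
  · refine tsum_congr fun k => ?_
    rw [lintegral_smul_measure, lintegral_dirac' _ hind]
    by_cases hx : x k ≤ t
    · simp only [indicator_of_mem (show ENNReal.ofReal (x k) ∈ Icc (0:ℝ≥0∞) (ENNReal.ofReal t) by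
        simp [ENNReal.ofReal_le_ofReal_iff ht0, hx]), if_pos hx, if_pos (hx.trans ht1)]
      rw [smul_eq_mul, ← ENNReal.ofReal_mul (le_trans (hc k) (by linarith [hxc k])), mul_comm (x k)]
    · simp only [indicator_of_notMem
        (show ENNReal.ofReal (x k) ∉ Icc (0:ℝ≥0∞) (ENNReal.ofReal t) by
          simp [ENNReal.ofReal_le_ofReal_iff ht0, hx]), if_neg hx, smul_zero]
end


/-- Let O ⊆ (0,1] be an open subset of (0,1], written as a countable disjoint union of
intervals (x_k − c_k, x_k + c_k) ∩ (0,1] with centers x_k and radii c_k (radius 0 giving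
the empty interval). Then the measure
μ(dt) = (1/2)·1_{[0,1]∖O}(t) dt + Σ_k 1_{x_k ≤ 1}·c_k·δ_{x_k}(dt),
extended to a probability measure on [0,1] ∪ {∞} by placing the remaining mass at ∞,
is well defined (total mass on [0,1] at most 1) and satisfies
∫_{[0,t]} s dμ(s) = μ([0,t])² for all t ∈ [0,1]. -/
theorem stmt6 (x c : ℕ → ℝ) (hc : ∀ k, 0 ≤ c k) (hxc : ∀ k, 0 ≤ x k - c k)
    (hdisj : Pairwise (Function.onFun Disjoint
      (fun k => Set.Ioo (x k - c k) (x k + c k) ∩ Set.Ioc (0:ℝ) 1))) :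
    let O : Set ℝ := ⋃ k, Set.Ioo (x k - c k) (x k + c k) ∩ Set.Ioc (0:ℝ) 1
    let μ₀ : Measure ℝ≥0∞ :=
      (2:ℝ≥0∞)⁻¹ • Measure.map ENNReal.ofReal (volume.restrict (Set.Icc (0:ℝ) 1 \ O))
        + Measure.sum (fun k =>
            (if x k ≤ 1 then ENNReal.ofReal (c k) else 0) • Measure.dirac (ENNReal.ofReal (x k)))
    let μ : Measure ℝ≥0∞ := μ₀ + (1 - μ₀ Set.univ) • Measure.dirac ⊤
    μ₀ Set.univ ≤ 1 ∧ IsProbabilityMeasure μ ∧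
      ∀ t ∈ Set.Icc (0:ℝ) 1,
        ∫⁻ s in Set.Icc 0 (ENNReal.ofReal t), s ∂μ
          = (μ (Set.Icc 0 (ENNReal.ofReal t)))^2 := by
  intro O μ₀ μ
  have hμ0 : μ₀ = mu0 x c := rfl
  have h1 : μ₀ Set.univ ≤ 1 := by
    rw [hμ0, mu0_univ]
    exact (work x c hc hxc hdisj 1 zero_le_one le_rfl).1
  have hμ : μ = μ₀ + (1 - μ₀ Set.univ) • Measure.dirac ⊤ := rfl
  have hprob : IsProbabilityMeasure μ := by
    constructor
    rw [hμ, Measure.add_apply, Measure.smul_apply, Measure.dirac_apply' _ MeasurableSet.univ,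
      indicator_univ, Pi.one_apply, smul_eq_mul, mul_one]
    exact add_tsub_cancel_of_le h1
  refine ⟨h1, hprob, ?_⟩
  intro t ht
  obtain ⟨ht0, ht1⟩ := ht
  have hdir : Measure.dirac (⊤:ℝ≥0∞) (Icc 0 (ENNReal.ofReal t)) = 0 := by
    rw [Measure.dirac_apply' _ measurableSet_Icc, indicator_of_notMem]
    intro h
    exact (lt_irrefl (⊤:ℝ≥0∞)) (lt_of_le_of_lt h.2 ENNReal.ofReal_lt_top)
  have hμS : μ (Icc 0 (ENNReal.ofReal t)) = μ₀ (Icc 0 (ENNReal.ofReal t)) := by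
    rw [hμ, Measure.add_apply, Measure.smul_apply, hdir, smul_zero, add_zero]
  have hint : ∫⁻ s in Icc 0 (ENNReal.ofReal t), s ∂μ
      = ∫⁻ s in Icc 0 (ENNReal.ofReal t), s ∂μ₀ := by
    rw [hμ, Measure.restrict_add, lintegral_add_measure, Measure.restrict_smul,
      lintegral_smul_measure, Measure.restrict_eq_zero.2 hdir, lintegral_zero_measure,
      smul_zero, add_zero]
  rw [hint, hμS, hμ0, mu0_apply x c hc hxc t ht0 ht1, mu0_lint x c hc hxc t ht0 ht1]
  exact (work x c hc hxc hdisj t ht0 ht1).2
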